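/- SINR expression for linear detectors: let H ∈ ℂ^{N×K}, B=HH^H, and fix a transmitter index k. For the estimator x̂_k = h_k^H (∑_{l=0}^{L-1} w_l B^l)(Hx + n) with E[xx^H]=I_K, E[nn^H]=σ²I_N, x and n independent zero-mean, the SINR (ratio of the power of the signal component due to x_k to the power of all remaining components) equals (wᵀφ_k φ_kᵀ w) / (wᵀ(Φ_k - φ_k φ_kᵀ)w), where [Φ_k]_{ij} = [B^{i+j}]_{kk} + σ²[B^{i+j-1}]_{kk} (indices i,j from 1 to L) and [φ_k]_i = [B^i]_{kk}, provided the denominator is nonzero. -/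

import Mathlib

open Matrix MeasureTheory

lemma integrable_star' {Ω : Type*} [MeasurableSpace Ω] {μ : Measure Ω} {f : Ω → ℂ}
    (h : Integrable f μ) : Integrable (fun ω => star (f ω)) μ :=
  Integrable.mono' h.norm
    (continuous_star.comp_aestronglyMeasurable h.aestronglyMeasurable)
    (Filter.Eventually.of_forall fun ω => by simp)

lemma sum_mulVec' {n m ι : Type*} [Fintype m] (s : Finset ι)
    (A : ι → Matrix n m ℂ) (v : m → ℂ) :
    (∑ i ∈ s, A i) *ᵥ v = ∑ i ∈ s, (A i *ᵥ v) := by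
  ext j
  simp only [Matrix.mulVec, dotProduct, Finset.sum_apply, Matrix.sum_apply,
    Finset.sum_mul]
  rw [Finset.sum_comm]

lemma dotProduct_sum' {m ι : Type*} [Fintype m] (s : Finset ι)
    (u : m → ℂ) (v : ι → m → ℂ) :
    u ⬝ᵥ (∑ i ∈ s, v i) = ∑ i ∈ s, u ⬝ᵥ v i := by
  simp only [dotProduct, Finset.sum_apply, Finset.mul_sum]
  rw [Finset.sum_comm]

lemma second_moment_sum_eq {Ω : Type*}
    {ι : Type*} [Fintype ι] (a : ι → ℂ) (y : Ω → ι → ℂ) :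
    ∀ ω, (∑ s, a s * y ω s) * star (∑ t, a t * y ω t)
      = ∑ s, ∑ t, a s * star (a t) * (y ω s * star (y ω t)) := by
  intro ω
  rw [star_sum, Finset.sum_mul_sum]
  refine Finset.sum_congr rfl fun s _ => Finset.sum_congr rfl fun t _ => ?_
  simp only [star_mul']
  ring

lemma second_moment_integrable {Ω : Type*} [MeasurableSpace Ω] (μ : Measure Ω)
    {ι : Type*} [Fintype ι] (a : ι → ℂ) (y : Ω → ι → ℂ)
    (hint : ∀ s t, Integrable (fun ω => y ω s * star (y ω t)) μ) :
    Integrable (fun ω => (∑ s, a s * y ω s) * star (∑ t, a t * y ω t)) μ := by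
  simp_rw [second_moment_sum_eq a y]
  exact integrable_finset_sum _ (fun s _ => integrable_finset_sum _
    (fun t _ => ((hint s t).const_mul _)))

lemma second_moment_sum {Ω : Type*} [MeasurableSpace Ω] (μ : Measure Ω)
    {ι : Type*} [Fintype ι] (a : ι → ℂ) (y : Ω → ι → ℂ) (C : ι → ι → ℂ)
    (hint : ∀ s t, Integrable (fun ω => y ω s * star (y ω t)) μ)
    (hC : ∀ s t, ∫ ω, y ω s * star (y ω t) ∂μ = C s t) :
    ∫ ω, (∑ s, a s * y ω s) * star (∑ t, a t * y ω t) ∂μ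
      = ∑ s, ∑ t, a s * star (a t) * C s t := by
  simp_rw [second_moment_sum_eq a y]
  rw [integral_finset_sum _ (fun s _ => integrable_finset_sum _
    (fun t _ => ((hint s t).const_mul _)))]
  refine Finset.sum_congr rfl fun s _ => ?_
  rw [integral_finset_sum _ (fun t _ => ((hint s t).const_mul _))]
  refine Finset.sum_congr rfl fun t _ => ?_
  rw [integral_const_mul, hC]

/-- SINR expression for the polynomial expansion detector: the ratio of the power of the
signal component (due to `x_k`) to the power of the remaining (interference plus noise)
components equals `(wᵀφₖφₖᵀw) / (wᵀ(Φₖ - φₖφₖᵀ)w)`.  Here `[Bⁿ]ₖₖ = hₖᴴ Bⁿ⁻¹ hₖ` and,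
in the 0-based indexing below, `bkk n = hₖᴴ Bⁿ hₖ = [B^{n+1}]ₖₖ`. -/
theorem sinr_polynomial_expansion
    (N K L : ℕ) (H : Matrix (Fin N) (Fin K) ℂ) (s2 : ℝ) (w : Fin L → ℝ) (k : Fin K)
    {Ω : Type*} [MeasurableSpace Ω] (μ : Measure Ω) [IsProbabilityMeasure μ]
    (x : Ω → Fin K → ℂ) (nv : Ω → Fin N → ℂ)
    (hxm : ∀ i, ∫ ω, x ω i ∂μ = 0) (hnm : ∀ i, ∫ ω, nv ω i ∂μ = 0)
    (hxx : ∀ i j, ∫ ω, x ω i * star (x ω j) ∂μ = if i = j then 1 else 0)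
    (hnn : ∀ i j, ∫ ω, nv ω i * star (nv ω j) ∂μ = if i = j then (s2 : ℂ) else 0)
    (hxn : ∀ i j, ∫ ω, x ω i * star (nv ω j) ∂μ = 0)
    (hixx : ∀ i j, Integrable (fun ω => x ω i * star (x ω j)) μ)
    (hinn : ∀ i j, Integrable (fun ω => nv ω i * star (nv ω j)) μ)
    (hixn : ∀ i j, Integrable (fun ω => x ω i * star (nv ω j)) μ) :
    let B : Matrix (Fin N) (Fin N) ℂ := H * Hᴴ
    let P : Matrix (Fin N) (Fin N) ℂ := ∑ l : Fin L, ((w l : ℂ) • B ^ (l : ℕ))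
    let hk : Fin N → ℂ := fun i => H i k
    -- estimator x̂ₖ = hₖᴴ P (Hx + n)
    let xhat : Ω → ℂ := fun ω => star hk ⬝ᵥ (P *ᵥ (H *ᵥ x ω + nv ω))
    -- `bkk n = hₖᴴ Bⁿ hₖ`, the diagonal entry `[B^{n+1}]ₖₖ`
    let bkk : ℕ → ℂ := fun n => star hk ⬝ᵥ (B ^ n *ᵥ hk)
    -- signal power |∑ₗ wₗ [B^{l+1}]ₖₖ|²
    let S : ℝ := Complex.normSq (∑ l : Fin L, (w l : ℂ) * bkk (l : ℕ))
    let phik : Fin L → ℝ := fun i => (bkk (i : ℕ)).re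
    let Phik : Matrix (Fin L) (Fin L) ℝ := fun i j =>
      (bkk ((i : ℕ) + (j : ℕ) + 1)).re + s2 * (bkk ((i : ℕ) + (j : ℕ))).re
    w ⬝ᵥ (Phik *ᵥ w) - (w ⬝ᵥ phik) ^ 2 ≠ 0 →
      S / ((∫ ω, Complex.normSq (xhat ω) ∂μ) - S)
        = (w ⬝ᵥ phik) ^ 2 / (w ⬝ᵥ (Phik *ᵥ w) - (w ⬝ᵥ phik) ^ 2) := by
  intro B P hk xhat bkk S phik Phik hden
  have hBH : Bᴴ = B := by simp [B, Matrix.conjTranspose_mul]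
  have hPH : Pᴴ = P := by
    simp only [P, Matrix.conjTranspose_sum, Matrix.conjTranspose_smul,
      Matrix.conjTranspose_pow, hBH, Complex.star_def, Complex.conj_ofReal]
  have hbstar : ∀ n, star (bkk n) = bkk n := by
    intro n
    show star (star hk ⬝ᵥ (B ^ n *ᵥ hk)) = star hk ⬝ᵥ (B ^ n *ᵥ hk)
    rw [← star_dotProduct_star, star_star, star_mulVec, conjTranspose_pow, hBH,
      ← dotProduct_mulVec]
  have hre : ∀ n, ((bkk n).re : ℂ) = bkk n := fun n =>
    Complex.conj_eq_iff_re.mp (hbstar n)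
  set c : Fin K → ℂ := star hk ᵥ* (P * H) with hc
  set r : Fin N → ℂ := star hk ᵥ* P with hr
  have hxhatω : ∀ ω, xhat ω = ∑ t : Fin K ⊕ Fin N,
      Sum.elim c r t * Sum.elim (x ω) (nv ω) t := by
    intro ω
    rw [Fintype.sum_sum_type]
    show star hk ⬝ᵥ (P *ᵥ (H *ᵥ x ω + nv ω)) = _
    rw [mulVec_add, dotProduct_add, mulVec_mulVec, dotProduct_mulVec, dotProduct_mulVec]
    simp [dotProduct]
    rfl
  set C : Fin K ⊕ Fin N → Fin K ⊕ Fin N → ℂ := fun s t =>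
    match s, t with
    | Sum.inl i, Sum.inl j => if i = j then 1 else 0
    | Sum.inl _, Sum.inr _ => 0
    | Sum.inr _, Sum.inl _ => 0
    | Sum.inr i, Sum.inr j => if i = j then (s2 : ℂ) else 0 with hC
  have heq : ∀ (i : Fin N) (j : Fin K), (fun ω => nv ω i * star (x ω j))
      = fun ω => star (x ω j * star (nv ω i)) := by
    intro i j; funext ω; rw [star_mul', star_star, mul_comm]
  have hint : ∀ s t, Integrable
      (fun ω => Sum.elim (x ω) (nv ω) s * star (Sum.elim (x ω) (nv ω) t)) μ := by
    rintro (i | i) (j | j)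
    · exact hixx i j
    · exact hixn i j
    · show Integrable (fun ω => nv ω i * star (x ω j)) μ
      rw [heq i j]
      exact integrable_star' (hixn j i)
    · exact hinn i j
  have hCval : ∀ s t, ∫ ω,
      Sum.elim (x ω) (nv ω) s * star (Sum.elim (x ω) (nv ω) t) ∂μ = C s t := by
    rintro (i | i) (j | j)
    · exact hxx i j
    · exact hxn i j
    · show ∫ ω, nv ω i * star (x ω j) ∂μ = 0
      rw [heq i j]
      have h0 := hxn j i
      simp only [Complex.star_def] at h0 ⊢
      rw [integral_conj, h0, map_zero]
    · exact hnn i j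
  have hJ : ∫ ω, xhat ω * star (xhat ω) ∂μ
      = (∑ j, c j * star (c j)) + (s2 : ℂ) * ∑ i, r i * star (r i) := by
    simp_rw [hxhatω]
    rw [second_moment_sum μ _ _ C hint hCval]
    rw [Fintype.sum_sum_type]
    congr 1
    · refine Finset.sum_congr rfl fun j _ => ?_
      rw [Fintype.sum_sum_type]
      simp [hC, Finset.mul_sum, mul_ite]
    · rw [Finset.mul_sum]
      refine Finset.sum_congr rfl fun i _ => ?_
      rw [Fintype.sum_sum_type]
      simp [hC, mul_ite]
      ring
  have hcdot : (∑ j, c j * star (c j)) = star hk ⬝ᵥ ((P * H * (Hᴴ * P)) *ᵥ hk) := by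
    have h1 : (∑ j, c j * star (c j)) = c ⬝ᵥ star c := rfl
    rw [h1, hc, star_vecMul, star_star, Matrix.conjTranspose_mul, hPH,
      ← dotProduct_mulVec, mulVec_mulVec]
  have hB1 : P * H * (Hᴴ * P) = P * B * P := by
    simp only [B, Matrix.mul_assoc]
  have hrdot : (∑ i, r i * star (r i)) = star hk ⬝ᵥ ((P * P) *ᵥ hk) := by
    have h1 : (∑ i, r i * star (r i)) = r ⬝ᵥ star r := rfl
    rw [h1, hr, star_vecMul, hPH, ← dotProduct_mulVec, mulVec_mulVec, star_star]
  have hquad : ∀ (d : ℕ), star hk ⬝ᵥ ((P * B ^ d * P) *ᵥ hk)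
      = ∑ l : Fin L, ∑ m : Fin L, (w l : ℂ) * (w m : ℂ) * bkk ((l : ℕ) + (m : ℕ) + d) := by
    intro d
    have hP : P * B ^ d * P
        = ∑ l : Fin L, ∑ m : Fin L, ((w l : ℂ) * (w m : ℂ)) • B ^ ((l : ℕ) + (m : ℕ) + d) := by
      simp only [P, Finset.sum_mul, Finset.mul_sum, Matrix.smul_mul, Matrix.mul_smul]
      refine Finset.sum_congr rfl fun l _ => Finset.sum_congr rfl fun m _ => ?_
      rw [smul_smul, ← pow_add, ← pow_add]
      ring_nf
    rw [hP, sum_mulVec', dotProduct_sum']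
    refine Finset.sum_congr rfl fun l _ => ?_
    rw [sum_mulVec', dotProduct_sum']
    refine Finset.sum_congr rfl fun m _ => ?_
    rw [smul_mulVec, dotProduct_smul, smul_eq_mul]
  have hquad0 : star hk ⬝ᵥ ((P * P) *ᵥ hk)
      = ∑ l : Fin L, ∑ m : Fin L, (w l : ℂ) * (w m : ℂ) * bkk ((l : ℕ) + (m : ℕ)) := by
    have := hquad 0
    simpa [pow_zero, Matrix.mul_one] using this
  have hquad1 := hquad 1
  rw [pow_one] at hquad1
  have hInt : Integrable (fun ω => xhat ω * star (xhat ω)) μ := by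
    have := second_moment_integrable μ (Sum.elim c r) (fun ω => Sum.elim (x ω) (nv ω)) hint
    simp_rw [← hxhatω] at this
    exact this
  have hE : (∫ ω, Complex.normSq (xhat ω) ∂μ) = w ⬝ᵥ (Phik *ᵥ w) := by
    have h1 : ∀ ω, Complex.normSq (xhat ω) = (xhat ω * star (xhat ω)).re := by
      intro ω
      rw [Complex.star_def, Complex.mul_conj, Complex.ofReal_re]
    have h2 := integral_re (𝕜 := ℂ) hInt
    simp only [RCLike.re_to_complex] at h2
    simp_rw [h1]
    rw [h2, hJ, hcdot, hB1, hrdot, hquad1, hquad0]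
    have h3 : ((w ⬝ᵥ (Phik *ᵥ w) : ℝ) : ℂ)
        = (∑ l : Fin L, ∑ m : Fin L, (w l:ℂ) * (w m:ℂ) * bkk ((l:ℕ)+(m:ℕ)+1))
          + (s2:ℂ) * ∑ l : Fin L, ∑ m : Fin L, (w l:ℂ) * (w m:ℂ) * bkk ((l:ℕ)+(m:ℕ)) := by
      simp only [dotProduct, mulVec, Phik]
      push_cast
      simp_rw [Finset.mul_sum]
      rw [← Finset.sum_add_distrib]
      refine Finset.sum_congr rfl fun l _ => ?_
      rw [← Finset.sum_add_distrib]
      refine Finset.sum_congr rfl fun m _ => ?_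
      simp only [hre]
      ring
    rw [← h3]
    simp
  have hS : S = (w ⬝ᵥ phik) ^ 2 := by
    have h1 : ((w ⬝ᵥ phik : ℝ) : ℂ) = ∑ l : Fin L, (w l : ℂ) * ((bkk (l:ℕ)).re : ℂ) := by
      simp [dotProduct, phik]
    have h2 : (∑ l : Fin L, (w l : ℂ) * bkk (l : ℕ)) = ((w ⬝ᵥ phik : ℝ) : ℂ) := by
      rw [h1]
      exact Finset.sum_congr rfl fun l _ => by rw [hre]
    show Complex.normSq (∑ l : Fin L, (w l : ℂ) * bkk (l : ℕ)) = _
    rw [h2, Complex.normSq_ofReal, sq]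
  rw [hS, hE]
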